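/- For the 3×4 matrix X₅ = [[1,1,1,1],[1,1,1,0],[1,0,0,0]], the largest singular value satisfies σ₁(X₅)² < 7, and consequently σ₂(X₅)² + σ₃(X₅)² > 1. -/

import Mathlib

open Matrix BigOperators

/-- The (unordered) singular values of a complex matrix `A`: square roots of the
eigenvalues of `Aᴴ * A`. -/
noncomputable def singVals {m n : ℕ} (A : Matrix (Fin m) (Fin n) ℂ) : Fin n → ℝ :=
  fun i => Real.sqrt ((Matrix.isHermitian_conjTranspose_mul_self A).eigenvalues i)

/-- The trace norm: sum of the singular values. -/
noncomputable def traceNorm {m n : ℕ} (A : Matrix (Fin m) (Fin n) ℂ) : ℝ :=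
  ∑ i, singVals A i

/-- The Frobenius norm. -/
noncomputable def frobNorm {m n : ℕ} (A : Matrix (Fin m) (Fin n) ℂ) : ℝ :=
  Real.sqrt (∑ i, ∑ j, ‖A i j‖ ^ 2)

/-- `sigma A k` is the `k`-th largest singular value of `A` (1-indexed), `0` if out of range. -/
noncomputable def sigma {m n : ℕ} (A : Matrix (Fin m) (Fin n) ℂ) (k : ℕ) : ℝ :=
  if h : 1 ≤ k ∧ k ≤ n then
    singVals A (Tuple.sort (singVals A) ⟨n - k, by omega⟩)
  else 0

/-- Number of entries of `A` equal to `1`. -/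
noncomputable def onesCount {a b : ℕ} (A : Matrix (Fin a) (Fin b) ℂ) : ℕ := by
  classical
  exact Finset.card (Finset.univ.filter fun p : Fin a × Fin b => A p.1 p.2 = 1)

/-- Minimum trace norm of an `n × n` (0,1)-matrix with exactly `m` ones. -/
noncomputable def psi (n m : ℕ) : ℝ :=
  sInf {x | ∃ A : Matrix (Fin n) (Fin n) ℂ, (∀ i j, A i j = 0 ∨ A i j = 1) ∧
    onesCount A = m ∧ traceNorm A = x}

private theorem det4 (A : Matrix (Fin 4) (Fin 4) ℂ) : A.det =
    A 0 0 * (A 1 1 * (A 2 2 * A 3 3 - A 2 3 * A 3 2) - A 1 2 * (A 2 1 * A 3 3 - A 2 3 * A 3 1) + A 1 3 * (A 2 1 * A 3 2 - A 2 2 * A 3 1))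
  - A 0 1 * (A 1 0 * (A 2 2 * A 3 3 - A 2 3 * A 3 2) - A 1 2 * (A 2 0 * A 3 3 - A 2 3 * A 3 0) + A 1 3 * (A 2 0 * A 3 2 - A 2 2 * A 3 0))
  + A 0 2 * (A 1 0 * (A 2 1 * A 3 3 - A 2 3 * A 3 1) - A 1 1 * (A 2 0 * A 3 3 - A 2 3 * A 3 0) + A 1 3 * (A 2 0 * A 3 1 - A 2 1 * A 3 0))
  - A 0 3 * (A 1 0 * (A 2 1 * A 3 2 - A 2 2 * A 3 1) - A 1 1 * (A 2 0 * A 3 2 - A 2 2 * A 3 0) + A 1 2 * (A 2 0 * A 3 1 - A 2 1 * A 3 0)) := by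
  rw [Matrix.det_succ_row_zero]
  simp [Fin.sum_univ_succ, Matrix.det_fin_three, Fin.succAbove, Matrix.submatrix_apply,
    show (Fin.succ 2 : Fin 4) = 3 from rfl, show (Fin.castSucc 2 : Fin 4) = 2 from rfl,
    show ((1:Fin 4) < 3) from by decide]
  ring

private theorem trace_eq_sum_eig {n : Type*} [Fintype n] [DecidableEq n]
    (A : Matrix n n ℂ) (hA : A.IsHermitian) :
    A.trace = ∑ i, (hA.eigenvalues i : ℂ) := by
  conv_lhs => rw [hA.spectral_theorem]
  rw [Unitary.conjStarAlgAut_apply]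
  rw [Matrix.trace_mul_cycle]
  rw [(Matrix.mem_unitaryGroup_iff').mp (hA.eigenvectorUnitary).2]
  simp [Matrix.trace_diagonal]

theorem stmt11 :
    sigma (!![1, 1, 1, 1; 1, 1, 1, 0; 1, 0, 0, 0] : Matrix (Fin 3) (Fin 4) ℂ) 1 ^ 2 < 7 ∧
    1 < sigma (!![1, 1, 1, 1; 1, 1, 1, 0; 1, 0, 0, 0] : Matrix (Fin 3) (Fin 4) ℂ) 2 ^ 2 +
        sigma (!![1, 1, 1, 1; 1, 1, 1, 0; 1, 0, 0, 0] : Matrix (Fin 3) (Fin 4) ℂ) 3 ^ 2 := by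
  set A : Matrix (Fin 3) (Fin 4) ℂ := !![1, 1, 1, 1; 1, 1, 1, 0; 1, 0, 0, 0] with hAdef
  have hM : Aᴴ * A = !![3,2,2,1; 2,2,2,1; 2,2,2,1; 1,1,1,1] := by
    ext i j
    fin_cases i <;> fin_cases j <;>
      simp [hAdef, Matrix.mul_apply, Fin.sum_univ_succ, Matrix.conjTranspose_apply,
        Matrix.vecHead, Matrix.vecTail] <;> norm_num
  have hHerm : (Aᴴ * A).IsHermitian := Matrix.isHermitian_conjTranspose_mul_self A
  set e : Fin 4 → ℝ := hHerm.eigenvalues with he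
  -- nonnegativity
  have hnn : ∀ i, 0 ≤ e i := Matrix.eigenvalues_conjTranspose_mul_self_nonneg A
  -- each eigenvalue is a root of the characteristic polynomial
  have hroot : ∀ i, e i ^ 4 - 8 * e i ^ 3 + 8 * e i ^ 2 - 2 * e i = 0 := by
    intro i
    set μ : ℝ := e i with hμ
    have h : μ ∈ spectrum ℝ (Aᴴ * A) := hHerm.eigenvalues_mem_spectrum_real i
    rw [hM] at h
    rw [spectrum.mem_iff, Matrix.isUnit_iff_isUnit_det, isUnit_iff_ne_zero, not_ne_iff] at h
    have key : algebraMap ℝ (Matrix (Fin 4) (Fin 4) ℂ) μ - !![3,2,2,1; 2,2,2,1; 2,2,2,1; 1,1,1,1]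
        = !![(μ:ℂ)-3,-2,-2,-1; -2,(μ:ℂ)-2,-2,-1; -2,-2,(μ:ℂ)-2,-1; -1,-1,-1,(μ:ℂ)-1] := by
      ext i j
      fin_cases i <;> fin_cases j <;>
        simp [Matrix.algebraMap_matrix_apply, Matrix.vecHead, Matrix.vecTail]
    rw [key, det4] at h
    have h2 : ((μ:ℂ)^4 - 8*μ^3 + 8*μ^2 - 2*μ) = 0 := by
      rw [← h]
      simp
      ring
    exact_mod_cast h2
  -- every eigenvalue is < 7
  have hlt7 : ∀ i, e i < 7 := by
    intro i
    by_contra hc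
    push_neg at hc
    have := hroot i
    nlinarith [hnn i, sq_nonneg (e i), sq_nonneg (e i - 7)]
  -- sum of eigenvalues = 8
  have hsum : ∑ i, e i = 8 := by
    have h1 : (Aᴴ * A).trace = ∑ i, (e i : ℂ) := trace_eq_sum_eig _ hHerm
    rw [hM] at h1
    have h2 : (!![3,2,2,1; 2,2,2,1; 2,2,2,1; 1,1,1,1] : Matrix (Fin 4) (Fin 4) ℂ).trace = 8 := by
      simp [Matrix.trace, Matrix.diag, Fin.sum_univ_succ, Matrix.vecHead, Matrix.vecTail]
      norm_num
    rw [h2] at h1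
    have h3 : ((∑ i, e i : ℝ) : ℂ) = 8 := by push_cast; rw [← h1]
    exact_mod_cast h3
  -- some eigenvalue is zero
  have hzero : ∃ i, e i = 0 := by
    have h1 : (Aᴴ * A).det = ∏ i, (e i : ℂ) := hHerm.det_eq_prod_eigenvalues
    rw [hM] at h1
    have h2 : (!![3,2,2,1; 2,2,2,1; 2,2,2,1; 1,1,1,1] : Matrix (Fin 4) (Fin 4) ℂ).det = 0 := by
      rw [det4]; simp
    rw [h2] at h1
    obtain ⟨i, -, hi⟩ := Finset.prod_eq_zero_iff.mp h1.symm
    exact ⟨i, by exact_mod_cast hi⟩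
  -- the sorting permutation
  set g := Tuple.sort (singVals A) with hg
  have hmono : Monotone (singVals A ∘ g) := Tuple.monotone_sort (singVals A)
  have hsv : ∀ i, singVals A i = Real.sqrt (e i) := fun i => rfl
  -- smallest sorted eigenvalue is 0
  have hg0 : e (g 0) = 0 := by
    obtain ⟨i0, hi0⟩ := hzero
    have h1 : singVals A (g 0) ≤ singVals A (g (g.symm i0)) := by
      have : (0 : Fin 4) ≤ g.symm i0 := Fin.zero_le _
      exact hmono this
    rw [Equiv.apply_symm_apply] at h1
    rw [hsv, hsv, hi0, Real.sqrt_zero] at h1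
    have h2 : Real.sqrt (e (g 0)) = 0 := le_antisymm h1 (Real.sqrt_nonneg _)
    exact (Real.sqrt_eq_zero (hnn _)).mp h2
  -- sum over the permuted eigenvalues
  have hpsum : e (g 0) + e (g 1) + e (g 2) + e (g 3) = 8 := by
    have := Equiv.sum_comp g e
    rw [hsum] at this
    rw [← this, Fin.sum_univ_four]
  -- unfolding sigma
  have hs1 : sigma A 1 = singVals A (g ⟨3, by norm_num⟩) := by
    rw [sigma, dif_pos (by norm_num : 1 ≤ 1 ∧ 1 ≤ 4)]
  have hs2 : sigma A 2 = singVals A (g ⟨2, by norm_num⟩) := by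
    rw [sigma, dif_pos (by norm_num : 1 ≤ 2 ∧ 2 ≤ 4)]
  have hs3 : sigma A 3 = singVals A (g ⟨1, by norm_num⟩) := by
    rw [sigma, dif_pos (by norm_num : 1 ≤ 3 ∧ 3 ≤ 4)]
  have hsq : ∀ i, singVals A i ^ 2 = e i := by
    intro i; rw [hsv]; exact Real.sq_sqrt (hnn i)
  have hg3 : (⟨3, by norm_num⟩ : Fin 4) = 3 := rfl
  have hg2 : (⟨2, by norm_num⟩ : Fin 4) = 2 := rfl
  have hg1 : (⟨1, by norm_num⟩ : Fin 4) = 1 := rfl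
  constructor
  · rw [hs1, hsq]
    exact hlt7 _
  · rw [hs2, hs3, hsq, hsq, hg2, hg1]
    have h37 : e (g 3) < 7 := hlt7 _
    rw [hg3] at hs1
    linarith [hpsum, hg0, h37]
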